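/- The one-dimensional entropy conservative flux F̃ = (F̃₁, F̃₂, F̃₃) defined in terms of arithmetic, logarithmic, and Lorentz means of the parameter vector z = (ρ, ρ/p, u) satisfies Tadmor's condition [[V]]ᵀ F̃ = [[ψ]], where V = ((Γ-S)/(Γ-1) + ρ/p, ρWu/p, -ρW/p)ᵀ are the entropy variables and ψ = ρuW is the potential, for any pair of admissible states (ρ_i, u_i, p_i), i ∈ {L,R}. -/

import Mathlib

open Real

/-- The logarithmic mean (continuous extension on the diagonal). -/
noncomputable def logMean (aL aR : ℝ) : ℝ :=
  if aL = aR then aL else (aR - aL) / (Real.log aR - Real.log aL)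

lemma logMean_jump {a b : ℝ} (ha : 0 < a) (hb : 0 < b) :
    b - a = logMean a b * (Real.log b - Real.log a) := by
  unfold logMean
  split_ifs with h
  · simp [h]
  · have hlog : Real.log b - Real.log a ≠ 0 := by
      intro hc
      apply h
      have h2 : Real.log a = Real.log b := by linarith
      calc a = Real.exp (Real.log a) := (Real.exp_log ha).symm
        _ = Real.exp (Real.log b) := by rw [h2]
        _ = b := Real.exp_log hb
    field_simp

lemma logMean_pos {a b : ℝ} (ha : 0 < a) (hb : 0 < b) : 0 < logMean a b := by
  unfold logMean
  split_ifs with h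
  · exact ha
  · rcases lt_or_gt_of_ne h with hlt | hgt
    · exact div_pos (by linarith) (by linarith [Real.log_lt_log ha hlt])
    · have h2 : Real.log b < Real.log a := Real.log_lt_log hb hgt
      have h3 := div_pos (a := a - b) (b := Real.log a - Real.log b)
        (by linarith) (by linarith)
      rw [show b - a = -(a - b) by ring,
        show Real.log b - Real.log a = -(Real.log a - Real.log b) by ring,
        neg_div_neg_eq]
      exact h3

/-- The core algebraic identity satisfied by the entropy conservative flux,
with all jumps expressed through the jump of `u` and the jumps of `z₁, z₂`. -/
lemma ec_flux_key (mz1 mz2 mz3 mW muW LM F2 F3 Q K du dz1 dz2 : ℝ)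
    (hQ : Q = mz2 * mW ^ 2 + mz2 * mz3 * mW * LM - mz2 * muW * LM)
    (hQ0 : Q ≠ 0)
    (hF2 : F2 = Q⁻¹ * (K * mz2 * LM + mz1 * mW ^ 2 + mz1 * mz3 * mW * LM))
    (hF3 : F3 = Q⁻¹ * (mz1 * mW * muW + mz1 * mz3 * muW * LM
      + K * (mz2 * mW + mz2 * mz3 * LM))) :
    (muW * dz1 + K * dz2) + (mz2 * (mz3 * LM * du + mW * du) + muW * dz2) * F2
      - (mz2 * (LM * du) + mW * dz2) * F3
      = mz1 * (mz3 * LM * du + mW * du) + muW * dz1 := by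
  subst hF2 hF3
  field_simp
  rw [hQ]
  ring

set_option maxHeartbeats 2000000 in
/-- Tadmor's entropy conservation condition `[[V]]ᵀ F̃ = [[ψ]]` for the 1D
entropy conservative flux of special RHD, for any pair of admissible states. -/
theorem ec_flux_tadmor (Γ ρL uL pL ρR uR pR : ℝ)
    (hΓ : 1 < Γ) (hΓ2 : Γ ≤ 2)
    (hρL : 0 < ρL) (hρR : 0 < ρR) (hpL : 0 < pL) (hpR : 0 < pR)
    (huL : |uL| < 1) (huR : |uR| < 1)
    (WL WR LM mz1 mz2 mz3 mW muW lnz1 lnz2 F1 Q F2 F3 : ℝ)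
    (hWL : WL = 1 / Real.sqrt (1 - uL ^ 2))
    (hWR : WR = 1 / Real.sqrt (1 - uR ^ 2))
    -- Lorentz mean of z₃ = u
    (hLM : LM = (uL + uR) /
      (Real.sqrt (1 - uL ^ 2) * Real.sqrt (1 - uR ^ 2) *
        (Real.sqrt (1 - uL ^ 2) + Real.sqrt (1 - uR ^ 2))))
    -- arithmetic means
    (hmz1 : mz1 = (ρL + ρR) / 2)
    (hmz2 : mz2 = (ρL / pL + ρR / pR) / 2)
    (hmz3 : mz3 = (uL + uR) / 2)
    (hmW : mW = (WL + WR) / 2)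
    (hmuW : muW = (uL * WL + uR * WR) / 2)
    -- logarithmic means
    (hlnz1 : lnz1 = logMean ρL ρR)
    (hlnz2 : lnz2 = logMean (ρL / pL) (ρR / pR))
    -- the entropy conservative flux
    (hF1 : F1 = lnz1 * muW)
    (hQ : Q = mz2 * mW ^ 2 + mz2 * mz3 * mW * LM - mz2 * muW * LM)
    (hF2 : F2 = Q⁻¹ * ((1 + 1 / ((Γ - 1) * lnz2)) * mz2 * LM * F1
      + mz1 * mW ^ 2 + mz1 * mz3 * mW * LM))
    (hF3 : F3 = Q⁻¹ * (mz1 * mW * muW + mz1 * mz3 * muW * LM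
      + (1 + 1 / ((Γ - 1) * lnz2)) * F1 * (mz2 * mW + mz2 * mz3 * LM))) :
    (((Γ - (Real.log pR - Γ * Real.log ρR)) / (Γ - 1) + ρR / pR)
        - ((Γ - (Real.log pL - Γ * Real.log ρL)) / (Γ - 1) + ρL / pL)) * F1
      + (ρR * WR * uR / pR - ρL * WL * uL / pL) * F2
      + ((-(ρR * WR) / pR) - (-(ρL * WL) / pL)) * F3
      = ρR * uR * WR - ρL * uL * WL := by
  have huL2 : uL ^ 2 < 1 := by
    have := abs_lt.mp huL; nlinarith
  have huR2 : uR ^ 2 < 1 := by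
    have := abs_lt.mp huR; nlinarith
  set sL := Real.sqrt (1 - uL ^ 2) with hsL
  set sR := Real.sqrt (1 - uR ^ 2) with hsR
  have hsL0 : 0 < sL := Real.sqrt_pos.mpr (by linarith)
  have hsR0 : 0 < sR := Real.sqrt_pos.mpr (by linarith)
  have hsL2 : sL ^ 2 = 1 - uL ^ 2 := Real.sq_sqrt (by linarith)
  have hsR2 : sR ^ 2 = 1 - uR ^ 2 := Real.sq_sqrt (by linarith)
  have hWL0 : 0 < WL := by rw [hWL]; positivity
  have hWR0 : 0 < WR := by rw [hWR]; positivity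
  have hpL' : pL ≠ 0 := ne_of_gt hpL
  have hpR' : pR ≠ 0 := ne_of_gt hpR
  have hΓ1 : Γ - 1 ≠ 0 := by intro h; linarith [sub_eq_zero.mp h]
  -- jump of W is the Lorentz mean times the jump of u
  have hdW : WR - WL = LM * (uR - uL) := by
    rw [hWL, hWR, hLM]
    have h1 : sL ≠ 0 := ne_of_gt hsL0
    have h2 : sR ≠ 0 := ne_of_gt hsR0
    have h3 : sL + sR ≠ 0 := by positivity
    field_simp
    ring_nf
    linear_combination hsL2 - hsR2
  -- Q is positive, hence nonzero
  have hQ0 : Q ≠ 0 := by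
    have hq : Q = mz2 * (WL * WR) := by
      rw [hQ, hmz2, hmW, hmuW, hmz3]
      linear_combination ((ρL / pL + ρR / pR) / 2 * (WR - WL) / 4) * hdW
    rw [hq, hmz2]
    positivity
  -- log mean jump relations and positivity
  have hl1 : lnz1 ≠ 0 := by
    rw [hlnz1]; exact ne_of_gt (logMean_pos hρL hρR)
  have hl2 : lnz2 ≠ 0 := by
    rw [hlnz2]; exact ne_of_gt (logMean_pos (div_pos hρL hpL) (div_pos hρR hpR))
  have hj1 : ρR - ρL = lnz1 * (Real.log ρR - Real.log ρL) := by
    rw [hlnz1]; exact logMean_jump hρL hρR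
  have hj2 : ρR / pR - ρL / pL =
      lnz2 * ((Real.log ρR - Real.log pR) - (Real.log ρL - Real.log pL)) := by
    rw [hlnz2, ← Real.log_div hρR.ne' hpR.ne', ← Real.log_div hρL.ne' hpL.ne']
    exact logMean_jump (div_pos hρL hpL) (div_pos hρR hpR)
  set K : ℝ := (1 + 1 / ((Γ - 1) * lnz2)) * F1 with hK
  -- the jump of the first entropy variable, times F1
  have hA : (((Γ - (Real.log pR - Γ * Real.log ρR)) / (Γ - 1) + ρR / pR)
        - ((Γ - (Real.log pL - Γ * Real.log ρL)) / (Γ - 1) + ρL / pL)) * F1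
      = muW * (ρR - ρL) + K * (ρR / pR - ρL / pL) := by
    have hx : Real.log ρR - Real.log ρL = (ρR - ρL) / lnz1 := by
      rw [hj1, mul_div_cancel_left₀ _ hl1]
    have hy : (Real.log ρR - Real.log pR) - (Real.log ρL - Real.log pL)
        = (ρR / pR - ρL / pL) / lnz2 := by
      rw [hj2, mul_div_cancel_left₀ _ hl2]
    have ha2 : Real.log ρR = Real.log ρL + (ρR - ρL) / lnz1 := by linarith
    have hb2 : Real.log pR = Real.log pL + (ρR - ρL) / lnz1
        - (ρR / pR - ρL / pL) / lnz2 := by linarith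
    rw [hK, hF1, ha2, hb2]
    field_simp
    ring
  have hkey := ec_flux_key mz1 mz2 mz3 mW muW LM F2 F3 Q K (uR - uL) (ρR - ρL)
      (ρR / pR - ρL / pL) hQ hQ0 (by rw [hF2, hK]; ring) (by rw [hF3])
  have hB : ρR * WR * uR / pR - ρL * WL * uL / pL
      = mz2 * (mz3 * LM * (uR - uL) + mW * (uR - uL))
        + muW * (ρR / pR - ρL / pL) := by
    rw [hmz2, hmz3, hmW, hmuW]
    linear_combination ((ρL / pL + ρR / pR) / 2 * ((uL + uR) / 2)) * hdW
  have hC : (-(ρR * WR) / pR) - (-(ρL * WL) / pL)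
      = -(mz2 * (LM * (uR - uL)) + mW * (ρR / pR - ρL / pL)) := by
    rw [hmz2, hmW]
    linear_combination (-((ρL / pL + ρR / pR) / 2)) * hdW
  have hR : ρR * uR * WR - ρL * uL * WL
      = mz1 * (mz3 * LM * (uR - uL) + mW * (uR - uL)) + muW * (ρR - ρL) := by
    rw [hmz1, hmz3, hmW, hmuW]
    linear_combination ((ρL + ρR) / 2 * ((uL + uR) / 2)) * hdW
  linear_combination hA + F2 * hB + F3 * hC + hkey - hR
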